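/- Compression Lemma (affine form). Suppose h ∈ Isom⁰(E) is an ε-hyperbolic affine isometry with linear part g. Then for all δ > 0 and all x ∈ E, the set B(h(x), δε/4) ∩ E^{wu}_{h(x)}(g) is contained in h(B(x, δ)). -/

import Mathlib

noncomputable section

open Set

/-- The underlying vector space ℝ^{2,1} of Minkowski (2+1)-space `E`. -/
abbrev V : Type := Fin 3 → ℝ

/-- The Lorentzian inner product `B` of signature (2,1). -/
def mB (u v : V) : ℝ := u 0 * v 0 + u 1 * v 1 - u 2 * v 2

def Timelike (v : V) : Prop := mB v v < 0

def UnitSpacelike (v : V) : Prop := mB v v = 1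

/-- future-pointing timelike vector. -/
def FutureTimelike (v : V) : Prop := mB v v < 0 ∧ 0 < v 2

/-- The standard Euclidean norm on ℝ³. -/
def eunorm (v : V) : ℝ := Real.sqrt (v 0 ^ 2 + v 1 ^ 2 + v 2 ^ 2)

/-- The Euclidean distance ρ. -/
def ρ (p q : V) : ℝ := eunorm (p - q)

/-- Open Euclidean ball `B(x,δ)`. -/
def eball (x : V) (δ : ℝ) : Set V := {y | ρ x y < δ}

/-- Euclidean δ-neighborhood `B(S,δ)` of a set `S`. -/
def nbhd (S : Set V) (δ : ℝ) : Set V := {y | ∃ x ∈ S, ρ x y < δ}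

/-- Membership in SO⁰(2,1): a linear isometry of `B` preserving orientation
(det = 1) and time-orientation (the future cone); this characterizes the
identity component of the group of linear isometries of `B`. -/
def InSO (g : V ≃ₗ[ℝ] V) : Prop :=
  (∀ u v : V, mB (g u) (g v) = mB u v) ∧
  LinearMap.det g.toLinearMap = 1 ∧
  ∀ v : V, FutureTimelike v → FutureTimelike (g v)

/-- Membership in Isom⁰(E) = SO⁰(2,1) ⋉ ℝ³. -/
def InIsom (φ : V ≃ᵃ[ℝ] V) : Prop := InSO φ.linear

/-- The point `u_φ = (cos φ, sin φ, 1)` on the circle S¹ of future-pointing null vectors. -/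
def uph (φ : ℝ) : V := ![Real.cos φ, Real.sin φ, 1]

/-- The circle S¹ of future-pointing null vectors. -/
def circ : Set V := {u | ∃ φ : ℝ, u = uph φ}

/-- An interval (arc) `{u_φ : φ₁ < φ < φ₂}` on S¹. -/
def arc (φ₁ φ₂ : ℝ) : Set V := {u | ∃ φ : ℝ, φ₁ < φ ∧ φ < φ₂ ∧ u = uph φ}

/-- Radial projection of a future-pointing null vector back onto S¹ (divide by third
coordinate); `u ↦ nproj (g u)` is the induced action `P(g)` of `g` on S¹. -/
def nproj (w : V) : V := (w 2)⁻¹ • w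

/-- `(a,b,c)` is a positively oriented basis of ℝ³. -/
def PosOriented (a b c : V) : Prop := 0 < Matrix.det (Matrix.of ![a, b, c])

/-- `xm = x⁻(v)`, `xp = x⁺(v)`: the two points of S¹ which are B-orthogonal to the
unit-spacelike vector `v`, labeled so that `(x⁻(v), x⁺(v), v)` is positively oriented. -/
def IsNullFrame (v xm xp : V) : Prop :=
  xm ∈ circ ∧ xp ∈ circ ∧ mB xm v = 0 ∧ mB xp v = 0 ∧ xm ≠ xp ∧ PosOriented xm xp v

/-- Eigendata of a hyperbolic element of SO⁰(2,1): `xm = x⁻(g)` and `xp = x⁺(g)` are the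
eigenvectors on S¹ with eigenvalues `lam < 1 < lam⁻¹`. -/
def IsHypData (g : V ≃ₗ[ℝ] V) (lam : ℝ) (xm xp : V) : Prop :=
  0 < lam ∧ lam < 1 ∧ xm ∈ circ ∧ xp ∈ circ ∧ g xm = lam • xm ∧ g xp = lam⁻¹ • xp

/-- `g` is hyperbolic: it has eigenvalues `lam < 1 < lam⁻¹` with null eigenvectors on S¹. -/
def IsHyperbolic (g : V ≃ₗ[ℝ] V) : Prop := ∃ lam xm xp, IsHypData g lam xm xp

/-- `g` is ε-hyperbolic: it is hyperbolic and `ρ(x⁺(g), x⁻(g)) ≥ ε`. -/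
def EpsHyperbolic (g : V ≃ₗ[ℝ] V) (ε : ℝ) : Prop :=
  ∃ lam xm xp, IsHypData g lam xm xp ∧ ε ≤ ρ xp xm

/-- Hyperbolic 2-space H² (hyperboloid model: the set of future unit timelike vectors,
the canonical section of the set of timelike lines). -/
def Hyp : Set V := {v | mB v v = -1 ∧ 0 < v 2}

/-- The origin `O ∈ H²`. -/
def Opt : V := ![0, 0, 1]

/-- Hyperbolic distance on H² (arcosh of |B(x,y)| for normalized x, y). -/
def hdist (x y : V) : ℝ := Real.log (|mB x y| + Real.sqrt (mB x y ^ 2 - 1))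

/-- The half-plane `H_v ⊂ H²` determined by a unit-spacelike vector `v`. -/
def halfPlane (v : V) : Set V := {u | u ∈ Hyp ∧ 0 < mB u v}

/-- The geodesic `l_v ⊂ H²` determined by a unit-spacelike vector `v`. -/
def geo (v : V) : Set V := {u | u ∈ Hyp ∧ mB u v = 0}

/-- The crooked plane `C₀` with vertex the origin directed by `e₁ = (1,0,0)`. -/
def C0 : Set V :=
  {u | u 0 = 0 ∧ |u 1| ≤ |u 2|} ∪
  {u | u 0 ≤ 0 ∧ u 1 = u 2} ∪
  {u | 0 ≤ u 0 ∧ u 1 = -u 2}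

/-- The open crooked half-space `H₀` bounded by `C₀`. -/
def H0 : Set V :=
  {u | 0 < u 0 ∧ 0 < u 1 + u 2} ∪
  {u | u 0 = 0 ∧ 0 < u 1 + u 2 ∧ 0 < u 2 - u 1} ∪
  {u | u 0 < 0 ∧ 0 < u 2 - u 1}

/-- `S` is a crooked plane `C(u,p) = p + g(C₀)` for some `g ∈ SO⁰(2,1)`. -/
def IsCrookedPlane (S : Set V) : Prop :=
  ∃ (g : V ≃ₗ[ℝ] V) (p : V), InSO g ∧ S = (fun x => p + g x) '' C0

/-- `H` is a crooked half-space `H(u,p) = p + g(H₀)` for some `g ∈ SO⁰(2,1)`. -/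
def IsCrookedHalfSpace (H : Set V) : Prop :=
  ∃ (g : V ≃ₗ[ℝ] V) (p : V), InSO g ∧ H = (fun x => p + g x) '' H0

/-- Signed generator: `g^+ = g`, `g^- = g⁻¹` (Bool `true` = `+`, `false` = `−`). -/
def sgen {G : Type*} [Group G] (g : G) (j : Bool) : G := if j then g else g⁻¹

/-- A word `w 0, …, w l` in the letters `(i,j)` (meaning `h_i^j`) is reduced:
`(i_{k+1}, j_{k+1}) ≠ (i_k, −j_k)` for all `k < l`. -/
def ReducedWord {m : ℕ} (l : ℕ) (w : ℕ → Fin m × Bool) : Prop :=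
  ∀ k, k < l → ¬((w (k + 1)).1 = (w k).1 ∧ (w (k + 1)).2 = !(w k).2)

/-- An affine Schottky configuration. -/
structure AffSchottky (m : ℕ) where
  hm : 2 ≤ m
  h : Fin m → V ≃ᵃ[ℝ] V
  hIsom : ∀ i, InIsom (h i)
  H : Fin m → Bool → Set V
  hCrooked : ∀ i j, IsCrookedHalfSpace (H i j)
  hDisj : ∀ i j i' j', (i, j) ≠ (i', j') → Disjoint (H i j) (H i' j')
  hPair : ∀ i, ⇑(h i) '' H i false = (closure (H i true))ᶜ

namespace AffSchottky

variable {m : ℕ} (S : AffSchottky m)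

/-- The crooked polyhedron `X = E − ⋃ closure(H_i^j)`. -/
def X : Set V := (⋃ i, ⋃ j, closure (S.H i j))ᶜ

/-- The affine Schottky group Γ generated by `h₁, …, h_m`. -/
def Γ : Subgroup (V ≃ᵃ[ℝ] V) := Subgroup.closure (Set.range S.h)

/-- The signed generators `h_i^j`. -/
def hp (i : Fin m) (j : Bool) : V ≃ᵃ[ℝ] V := sgen (S.h i) j

/-- `wprod w k = h_{i₀}^{j₀} ⋯ h_{i_{k-1}}^{j_{k-1}}` where `w t = (i_t, j_t)`. -/
def wprod (w : ℕ → Fin m × Bool) (k : ℕ) : V ≃ᵃ[ℝ] V :=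
  ((List.range k).map fun t => S.hp (w t).1 (w t).2).prod

end AffSchottky

/-- A (linear) Schottky configuration. -/
structure LinSchottky (m : ℕ) where
  hm : 2 ≤ m
  g : Fin m → V ≃ₗ[ℝ] V
  hSO : ∀ i, InSO (g i)
  a : Fin m → Bool → ℝ
  b : Fin m → Bool → ℝ
  hab : ∀ i j, a i j < b i j ∧ b i j - a i j < 2 * Real.pi
  hDisjCl : ∀ i j i' j', (i, j) ≠ (i', j') →
    Disjoint (closure (arc (a i j) (b i j))) (closure (arc (a i' j') (b i' j')))
  hPair : ∀ i, (fun u => nproj (g i u)) '' arc (a i false) (b i false) =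
    circ \ closure (arc (a i true) (b i true))
  hPairInv : ∀ i, (fun u => nproj ((g i)⁻¹ u)) '' arc (a i true) (b i true) =
    circ \ closure (arc (a i false) (b i false))

namespace LinSchottky

variable {m : ℕ} (S : LinSchottky m)

/-- The intervals `A_i^j ⊂ S¹`. -/
def A (i : Fin m) (j : Bool) : Set V := arc (S.a i j) (S.b i j)

/-- The Schottky group `G` generated by `g₁, …, g_m`. -/
def G : Subgroup (V ≃ₗ[ℝ] V) := Subgroup.closure (Set.range S.g)

/-- The signed generators `g_i^j`. -/
def gp (i : Fin m) (j : Bool) : V ≃ₗ[ℝ] V := sgen (S.g i) j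

/-- `wprod w k = g_{i₀}^{j₀} ⋯ g_{i_{k-1}}^{j_{k-1}}` where `w t = (i_t, j_t)`. -/
def wprod (w : ℕ → Fin m × Bool) (k : ℕ) : V ≃ₗ[ℝ] V :=
  ((List.range k).map fun t => S.gp (w t).1 (w t).2).prod

end LinSchottky

/-- Given directing unit-spacelike vectors `v i j` of the half-planes `H_i^j`, the
fundamental polygon `Δ = H² − ⋃ closure(H_i^j)` (closures taken in H²). -/
def linΔ {m : ℕ} (v : Fin m → Bool → V) : Set V :=
  Hyp \ ⋃ i, ⋃ j, Hyp ∩ closure (halfPlane (v i j))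

/-- Compression Lemma (affine form). If `h ∈ Isom⁰(E)` is an ε-hyperbolic affine
isometry with linear part `g`, then for all `δ > 0` and `x ∈ E`,
`B(h(x), δε/4) ∩ E^{wu}_{h(x)}(g) ⊆ h(B(x, δ))`. -/

private lemma rho_add (p w : V) : ρ p (p + w) = eunorm w := by
  have h1 : p - (p + w) = -w := by abel
  rw [ρ, h1]
  simp [eunorm, Pi.neg_apply, neg_sq]

private lemma eunorm_lt_iff (w : V) (r : ℝ) (hr : 0 < r) :
    eunorm w < r ↔ w 0 ^ 2 + w 1 ^ 2 + w 2 ^ 2 < r ^ 2 := Real.sqrt_lt' hr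

private lemma key (X Y Z ca sa cb sb a b lam ε δ : ℝ)
    (h4 : ca^2 + sa^2 = 1) (h5 : cb^2 + sb^2 = 1)
    (C1 : X^2 + Y^2 - Z^2 = 1)
    (C2 : X*ca + Y*sa - Z = 0) (C3 : X*cb + Y*sb - Z = 0)
    (hl0 : 0 < lam) (hl1 : lam < 1)
    (hε2 : ε^2 ≤ 2 - 2*(ca*cb + sa*sb))
    (hεpos : 0 < ε) (hδ : 0 < δ)
    (hu : (a*X + b*ca)^2 + (a*Y + b*sa)^2 + (a*Z + b)^2 < (δ*ε/4)^2) :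
    (a*X + lam*(b*ca))^2 + (a*Y + lam*(b*sa))^2 + (a*Z + lam*b)^2 < δ^2 := by
  have hda : (Y*ca - X*sa)^2 = 1 := by
    linear_combination (X^2+Y^2)*h4 + C1 - (X*ca+Y*sa+Z)*C2
  have hdb : (Y*cb - X*sb)^2 = 1 := by
    linear_combination (X^2+Y^2)*h5 + C1 - (X*cb+Y*sb+Z)*C3
  have hprod : (1+Z^2)*(1 - (ca*cb + sa*sb)) = 1 - (Y*ca-X*sa)*(Y*cb-X*sb) := by
    linear_combination (ca*cb+sa*sb)*C1 - (X*cb+Y*sb)*C2 - Z*C3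
  have hS : (1+Z^2)*(1 - (ca*cb + sa*sb)) ≤ 2 := by
    rw [hprod]
    nlinarith [sq_nonneg ((Y*ca-X*sa)+(Y*cb-X*sb))]
  have hc1 : ca*cb + sa*sb ≤ 1 := by nlinarith [sq_nonneg (ca-cb), sq_nonneg (sa-sb)]
  have t1 : (0:ℝ) ≤ 1+2*Z^2 := by positivity
  have t2 : (1+2*Z^2)*ε^2 ≤ (1+2*Z^2)*(2-2*(ca*cb+sa*sb)) := mul_le_mul_of_nonneg_left hε2 t1
  have t3 : (1+2*Z^2)*(2-2*(ca*cb+sa*sb)) ≤ 8 := by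
    have hid : (1+2*Z^2)*(2-2*(ca*cb+sa*sb)) = 4*((1+Z^2)*(1-(ca*cb+sa*sb))) - 2*(1-(ca*cb+sa*sb)) := by ring
    linarith
  have hZ : (1+2*Z^2)*ε^2 ≤ 8 := le_trans t2 t3
  have hU : (a*X + b*ca)^2 + (a*Y + b*sa)^2 + (a*Z + b)^2 = a^2 + 2*(a*Z+b)^2 := by
    linear_combination a^2*C1 + 2*a*b*C2 + b^2*h4
  have hW : (a*X + lam*(b*ca))^2 + (a*Y + lam*(b*sa))^2 + (a*Z + lam*b)^2
      = a^2 + 2*(a*Z + lam*b)^2 := by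
    linear_combination a^2*C1 + 2*a*(lam*b)*C2 + (lam*b)^2*h4
  rw [hW]
  rw [hU] at hu
  have e1 : (a*Z+lam*b)^2 ≤ lam*(a*Z+b)^2 + (1-lam)*(a*Z)^2 := by
    have hb := mul_nonneg (mul_nonneg hl0.le (sub_nonneg.2 hl1.le)) (sq_nonneg b)
    have hid : lam*(a*Z+b)^2 + (1-lam)*(a*Z)^2 - (a*Z+lam*b)^2 = lam*(1-lam)*b^2 := by ring
    linarith
  have e2 : a^2 + 2*(a*Z+lam*b)^2 ≤ (1+2*Z^2)*(a^2 + 2*(a*Z+b)^2) := by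
    have hid : (1+2*Z^2)*(a^2+2*(a*Z+b)^2) - (a^2 + 2*(lam*(a*Z+b)^2 + (1-lam)*(a*Z)^2))
        = 2*lam*(a*Z)^2 + 2*(1-lam)*(a*Z+b)^2 + 4*Z^2*(a*Z+b)^2 := by ring
    have n1 := mul_nonneg hl0.le (sq_nonneg (a*Z))
    have n2 := mul_nonneg (sub_nonneg.2 hl1.le) (sq_nonneg (a*Z+b))
    have n3 := mul_nonneg (sq_nonneg Z) (sq_nonneg (a*Z+b))
    linarith
  have hU2nn : (0:ℝ) ≤ a^2 + 2*(a*Z+b)^2 := by positivity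
  have hε2pos : (0:ℝ) < ε^2 := by positivity
  have h8 : ((1+2*Z^2)*(a^2+2*(a*Z+b)^2))*ε^2 ≤ 8*(a^2+2*(a*Z+b)^2) := by
    have := mul_le_mul_of_nonneg_right hZ hU2nn
    linarith [show ((1+2*Z^2)*(a^2+2*(a*Z+b)^2))*ε^2 = (1+2*Z^2)*ε^2*(a^2+2*(a*Z+b)^2) from by ring]
  have h9 : (8:ℝ)*(a^2+2*(a*Z+b)^2) < (δ^2/2)*ε^2 := by
    have h9' : (8:ℝ)*(δ*ε/4)^2 = (δ^2/2)*ε^2 := by ring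
    linarith
  have h10 : (1+2*Z^2)*(a^2+2*(a*Z+b)^2) < δ^2/2 :=
    lt_of_mul_lt_mul_right (lt_of_le_of_lt h8 h9) hε2pos.le
  have : (0:ℝ) < δ^2 := by positivity
  linarith


theorem stmt5 (h : V ≃ᵃ[ℝ] V) (hh : InIsom h) (lam : ℝ) (xm xp x0 : V)
    (hd : IsHypData h.linear lam xm xp) (hx0 : UnitSpacelike x0)
    (hgx0 : h.linear x0 = x0) (hor : PosOriented xm xp x0)
    (ε : ℝ) (hε : ε ≤ ρ xp xm) (δ : ℝ) (hδ : 0 < δ) (x : V) :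
    eball (h x) (δ * ε / 4) ∩
        ((fun u => h x + u) '' (Submodule.span ℝ ({x0, xp} : Set V) : Set V)) ⊆
      ⇑h '' eball x δ := by
  obtain ⟨hB, -, -⟩ := hh
  obtain ⟨hl0, hl1, hxmc, hxpc, hgxm, hgxp⟩ := hd
  obtain ⟨β, rfl⟩ := hxmc
  obtain ⟨α, rfl⟩ := hxpc
  rintro y ⟨hy1, u, huspan, rfl⟩
  simp only [eball, Set.mem_setOf_eq] at hy1
  by_cases hεpos : 0 < ε
  swap
  · exfalso
    have h1 : 0 ≤ ρ (h x) (h x + u) := Real.sqrt_nonneg _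
    have h2 : δ * ε / 4 ≤ 0 := by
      have := not_lt.mp hεpos
      nlinarith
    linarith
  rw [SetLike.mem_coe, Submodule.mem_span_pair] at huspan
  obtain ⟨a, b, rfl⟩ := huspan
  show h x + (a • x0 + b • uph α) ∈ ⇑h '' eball x δ
  have hlne : lam ≠ 0 := ne_of_gt hl0
  have hsmul : ∀ (c : ℝ) (v w : V), mB w (c • v) = c * mB w v := by
    intro c v w
    simp only [mB, Pi.smul_apply, smul_eq_mul]
    ring
  have hoxp : mB x0 (uph α) = 0 := by
    have h1 := hB x0 (uph α)
    rw [hgx0, hgxp, hsmul] at h1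
    have h2 : (lam⁻¹ - 1) * mB x0 (uph α) = 0 := by linear_combination h1
    rcases mul_eq_zero.mp h2 with h3 | h3
    · exfalso
      have h4 : lam⁻¹ = 1 := by linarith
      rw [inv_eq_one] at h4
      exact absurd h4 (ne_of_lt hl1)
    · exact h3
  have hoxm : mB x0 (uph β) = 0 := by
    have h1 := hB x0 (uph β)
    rw [hgx0, hgxm, hsmul] at h1
    have h2 : (lam - 1) * mB x0 (uph β) = 0 := by linear_combination h1
    rcases mul_eq_zero.mp h2 with h3 | h3
    · exact absurd (by linarith : lam = 1) (ne_of_lt hl1)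
    · exact h3
  have hC1 : x0 0 ^ 2 + x0 1 ^ 2 - x0 2 ^ 2 = 1 := by
    have h1 : x0 0 * x0 0 + x0 1 * x0 1 - x0 2 * x0 2 = 1 := hx0
    linear_combination h1
  have hC2 : x0 0 * Real.cos α + x0 1 * Real.sin α - x0 2 = 0 := by
    have h1 : x0 0 * Real.cos α + x0 1 * Real.sin α - x0 2 * 1 = 0 := hoxp
    linear_combination h1
  have hC3 : x0 0 * Real.cos β + x0 1 * Real.sin β - x0 2 = 0 := by
    have h1 : x0 0 * Real.cos β + x0 1 * Real.sin β - x0 2 * 1 = 0 := hoxm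
    linear_combination h1
  have hε2 : ε ^ 2 ≤ 2 - 2 * (Real.cos α * Real.cos β + Real.sin α * Real.sin β) := by
    have h1 : ε ^ 2 ≤ (uph α - uph β) 0 ^ 2 + (uph α - uph β) 1 ^ 2 + (uph α - uph β) 2 ^ 2 :=
      (Real.le_sqrt hεpos.le (by positivity)).mp hε
    have h2 : (uph α - uph β) 0 = Real.cos α - Real.cos β := rfl
    have h3 : (uph α - uph β) 1 = Real.sin α - Real.sin β := rfl
    have h4 : (uph α - uph β) 2 = 1 - 1 := rfl
    rw [h2, h3, h4] at h1
    nlinarith [Real.sin_sq_add_cos_sq α, Real.sin_sq_add_cos_sq β]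
  have hr : 0 < δ * ε / 4 := by positivity
  have hy2 : (a * x0 0 + b * Real.cos α) ^ 2 + (a * x0 1 + b * Real.sin α) ^ 2
      + (a * x0 2 + b) ^ 2 < (δ * ε / 4) ^ 2 := by
    rw [ρ, show h x - (h x + (a • x0 + b • uph α)) = -(a • x0 + b • uph α) from by abel] at hy1
    rw [eunorm_lt_iff _ _ hr] at hy1
    have e0 : (-(a • x0 + b • uph α)) 0 = -(a * x0 0 + b * Real.cos α) := rfl
    have e1 : (-(a • x0 + b • uph α)) 1 = -(a * x0 1 + b * Real.sin α) := rfl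
    have e2 : (-(a • x0 + b • uph α)) 2 = -(a * x0 2 + b * 1) := rfl
    rw [e0, e1, e2] at hy1
    have heq : (-(a * x0 0 + b * Real.cos α)) ^ 2 + (-(a * x0 1 + b * Real.sin α)) ^ 2
        + (-(a * x0 2 + b * 1)) ^ 2 = (a * x0 0 + b * Real.cos α) ^ 2
        + (a * x0 1 + b * Real.sin α) ^ 2 + (a * x0 2 + b) ^ 2 := by ring
    rw [heq] at hy1
    exact hy1
  have hcore := key (x0 0) (x0 1) (x0 2) (Real.cos α) (Real.sin α) (Real.cos β) (Real.sin β)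
    a b lam ε δ (Real.cos_sq_add_sin_sq α) (Real.cos_sq_add_sin_sq β) hC1 hC2 hC3
    hl0 hl1 hε2 hεpos hδ hy2
  refine ⟨x + (a • x0 + (lam * b) • uph α), ?_, ?_⟩
  · show ρ x (x + (a • x0 + (lam * b) • uph α)) < δ
    rw [rho_add, eunorm_lt_iff _ _ hδ]
    have e0 : (a • x0 + (lam * b) • uph α) 0 = a * x0 0 + lam * b * Real.cos α := rfl
    have e1 : (a • x0 + (lam * b) • uph α) 1 = a * x0 1 + lam * b * Real.sin α := rfl
    have e2 : (a • x0 + (lam * b) • uph α) 2 = a * x0 2 + lam * b * 1 := rfl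
    rw [e0, e1, e2]
    have heq : (a * x0 0 + lam * b * Real.cos α) ^ 2 + (a * x0 1 + lam * b * Real.sin α) ^ 2
        + (a * x0 2 + lam * b * 1) ^ 2 = (a * x0 0 + lam * (b * Real.cos α)) ^ 2
        + (a * x0 1 + lam * (b * Real.sin α)) ^ 2 + (a * x0 2 + lam * b) ^ 2 := by ring
    rw [heq]
    exact hcore
  · have hmap : h (x + (a • x0 + (lam * b) • uph α))
        = h.linear (a • x0 + (lam * b) • uph α) + h x := by
      have h1 := h.map_vadd x (a • x0 + (lam * b) • uph α)
      simpa [vadd_eq_add, add_comm] using h1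
    have hlin : h.linear (a • x0 + (lam * b) • uph α) = a • x0 + b • uph α := by
      rw [map_add, map_smul, map_smul, hgx0, hgxp, smul_smul]
      congr 1
      rw [show lam * b * lam⁻¹ = b from by field_simp]
    rw [hmap, hlin, add_comm]
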